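/- Let K be a field with char(K) ≠ 2,3 and t, t' ∈ K*. The maps θ_t(z) = t/z² and θ_{t'}(z) = t'/z² are conjugate over K by some h ∈ PGL₂(K) fixing the set {0, ∞} if and only if t/t' ∈ (K*)³ or t·t' ∈ (K*)³. Concretely: conjugation by h(z) = λz sends θ_t to θ_{t'} iff t/t' = λ³, and conjugation by h(z) = λ/z sends θ_t to θ_{t'} iff t·t' = λ³. -/

import Mathlib

/-- θ_t(z) = t/z² and θ_{t'}(z) = t'/z² are conjugate over K by a Möbius map
fixing {0, ∞} (necessarily of the form λz or λ/z) iff t/t' or t·t' is a cube in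
K*.  Concretely, conjugation by λz works iff t/t' = λ³ and conjugation by λ/z
works iff t·t' = λ³. -/
theorem stmt13 (K : Type*) [Field K] (h2 : (2 : K) ≠ 0) (h3 : (3 : K) ≠ 0)
    (t t' : K) (ht : t ≠ 0) (ht' : t' ≠ 0) :
    (((∃ l : K, l ≠ 0 ∧ ∀ z : K, z ≠ 0 → t / (l * z) ^ 2 = l * (t' / z ^ 2)) ∨
        (∃ l : K, l ≠ 0 ∧ ∀ z : K, z ≠ 0 → t / (l / z) ^ 2 = l / (t' / z ^ 2))) ↔
      ((∃ l : K, l ≠ 0 ∧ t / t' = l ^ 3) ∨ (∃ l : K, l ≠ 0 ∧ t * t' = l ^ 3))) ∧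
    (∀ l : K, l ≠ 0 →
      ((∀ z : K, z ≠ 0 → t / (l * z) ^ 2 = l * (t' / z ^ 2)) ↔ t / t' = l ^ 3)) ∧
    (∀ l : K, l ≠ 0 →
      ((∀ z : K, z ≠ 0 → t / (l / z) ^ 2 = l / (t' / z ^ 2)) ↔ t * t' = l ^ 3)) := by
  have key1 : ∀ l : K, l ≠ 0 →
      ((∀ z : K, z ≠ 0 → t / (l * z) ^ 2 = l * (t' / z ^ 2)) ↔ t / t' = l ^ 3) := by
    intro l hl
    constructor
    · intro h
      have := h 1 one_ne_zero
      field_simp at this ⊢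
      linear_combination this
    · intro h z hz
      field_simp at h ⊢
      ring_nf
      ring_nf at h
      linear_combination h
  have key2 : ∀ l : K, l ≠ 0 →
      ((∀ z : K, z ≠ 0 → t / (l / z) ^ 2 = l / (t' / z ^ 2)) ↔ t * t' = l ^ 3) := by
    intro l hl
    constructor
    · intro h
      have := h 1 one_ne_zero
      field_simp at this ⊢
      linear_combination this
    · intro h z hz
      field_simp
      ring_nf
      linear_combination h
  refine ⟨?_, key1, key2⟩
  constructor
  · rintro (⟨l, hl, hc⟩ | ⟨l, hl, hc⟩)
    · exact Or.inl ⟨l, hl, (key1 l hl).1 hc⟩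
    · exact Or.inr ⟨l, hl, (key2 l hl).1 hc⟩
  · rintro (⟨l, hl, hc⟩ | ⟨l, hl, hc⟩)
    · exact Or.inl ⟨l, hl, (key1 l hl).2 hc⟩
    · exact Or.inr ⟨l, hl, (key2 l hl).2 hc⟩
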